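/- Let p > 1, N ≥ 2 an integer, k ≠ 0, and δ ∈ (0, π). If H : [0, δ) → ℝ is differentiable on [0, δ) (one-sided at 0) with H(0) = 0 and satisfies the H-equation on (0, δ), and H' is continuous at 0, then H'(0) = (k²·(1-p) + k·(p-N))/(N-1); equivalently, H'(0) = (k·(1-p)/(N-1))·(k - (N-p)/(1-p)). In particular, if 1 < p < N then H'(0) = 0 when k = (N-p)/(1-p), and H'(0) < 0 when k < (N-p)/(1-p). -/

import Mathlib

noncomputable section
open Real Set Filter Topology

/-- `H` satisfies the first-order H-equation (for parameters `p`, `N`, `k`) on the set `I`: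
`((p-1)H² + k²)H' = (1-p)(H² + k²)² + (H² + k²)(k(p-N) + (2-N)·H·cot x)`. -/
def HEqOn (p : ℝ) (N : ℕ) (k : ℝ) (H : ℝ → ℝ) (I : Set ℝ) : Prop :=
  ∀ x ∈ I,
    ((p - 1) * (H x) ^ 2 + k ^ 2) * deriv H x =
      (1 - p) * ((H x) ^ 2 + k ^ 2) ^ 2
        + ((H x) ^ 2 + k ^ 2) * (k * (p - (N : ℝ)) + (2 - (N : ℝ)) * H x * Real.cot x)

/-- The initial slope of a solution of the H-equation with `H(0) = 0`:
`H'(0) = (k²(1-p) + k(p-N))/(N-1) = (k(1-p)/(N-1))·(k - (N-p)/(1-p))`; in particular, for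
`1 < p < N`, `H'(0) = 0` when `k = (N-p)/(1-p)` and `H'(0) < 0` when `k < (N-p)/(1-p)`. -/
theorem H_initial_slope (p : ℝ) (hp : 1 < p) (N : ℕ) (hN : 2 ≤ N) (k : ℝ) (hk : k ≠ 0)
    (δ : ℝ) (hδ0 : 0 < δ) (hδ : δ < π)
    (H : ℝ → ℝ)
    (hd0 : DifferentiableWithinAt ℝ H (Ici 0) 0)
    (hd : ∀ x ∈ Ioo (0 : ℝ) δ, DifferentiableAt ℝ H x)
    (hH0 : H 0 = 0)
    (heq : HEqOn p N k H (Ioo 0 δ))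
    (hcont : Tendsto (deriv H) (nhdsWithin 0 (Ioi 0)) (nhds (derivWithin H (Ici 0) 0))) :
    derivWithin H (Ici 0) 0 = (k ^ 2 * (1 - p) + k * (p - (N : ℝ))) / ((N : ℝ) - 1) ∧
    derivWithin H (Ici 0) 0 = k * (1 - p) / ((N : ℝ) - 1) * (k - ((N : ℝ) - p) / (1 - p)) ∧
    (p < (N : ℝ) →
      (k = ((N : ℝ) - p) / (1 - p) → derivWithin H (Ici 0) 0 = 0) ∧
      (k < ((N : ℝ) - p) / (1 - p) → derivWithin H (Ici 0) 0 < 0)) := by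
  set L := derivWithin H (Ici 0) 0 with hL
  have hN2 : (2 : ℝ) ≤ (N : ℝ) := by exact_mod_cast hN
  have hN1 : (N : ℝ) - 1 ≠ 0 := by linarith
  have hp1 : (1 : ℝ) - p ≠ 0 := by linarith
  -- slope limit : H x / x → L
  have hslope : Tendsto (fun x => H x / x) (𝓝[>] (0:ℝ)) (𝓝 L) := by
    have h1 : HasDerivWithinAt H L (Ici 0) 0 := hd0.hasDerivWithinAt
    rw [hasDerivWithinAt_iff_tendsto_slope] at h1
    rw [Ici_sdiff_left] at h1
    refine h1.congr' ?_
    filter_upwards [self_mem_nhdsWithin] with x hx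
    simp [slope_def_field, hH0]
  -- H → 0
  have hHlim : Tendsto H (𝓝[>] (0:ℝ)) (𝓝 0) := by
    have := hd0.continuousWithinAt.tendsto
    rw [hH0] at this
    exact this.mono_left (nhdsWithin_mono _ Ioi_subset_Ici_self)
  -- x / sin x → 1
  have hsin : Tendsto (fun x : ℝ => Real.sin x / x) (𝓝[>] (0:ℝ)) (𝓝 1) := by
    have h1 : HasDerivAt Real.sin 1 0 := by simpa using Real.hasDerivAt_sin 0
    have h2 := h1.hasDerivWithinAt (s := Ioi 0)
    rw [hasDerivWithinAt_iff_tendsto_slope] at h2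
    have h3 : Tendsto (slope Real.sin 0) (𝓝[>] (0:ℝ)) (𝓝 1) :=
      h2.mono_left (nhdsWithin_mono _ (by intro x hx; exact ⟨hx, ne_of_gt hx⟩))
    refine h3.congr' ?_
    filter_upwards [self_mem_nhdsWithin] with x hx
    simp [slope_def_field]
  have hxsin : Tendsto (fun x : ℝ => x / Real.sin x) (𝓝[>] (0:ℝ)) (𝓝 1) := by
    have := hsin.inv₀ one_ne_zero
    simp only [inv_one] at this
    refine this.congr' ?_
    filter_upwards [self_mem_nhdsWithin] with x hx
    simp [inv_div]
  -- x * cot x → 1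
  have hxcot : Tendsto (fun x : ℝ => x * Real.cot x) (𝓝[>] (0:ℝ)) (𝓝 1) := by
    have hcos : Tendsto (fun x : ℝ => Real.cos x) (𝓝[>] (0:ℝ)) (𝓝 1) := by
      have : Tendsto Real.cos (𝓝 (0:ℝ)) (𝓝 1) := by
        simpa using Real.continuous_cos.tendsto 0
      exact this.mono_left nhdsWithin_le_nhds
    have := hxsin.mul hcos
    rw [mul_one] at this
    refine this.congr' ?_
    filter_upwards [self_mem_nhdsWithin] with x hx
    rw [Real.cot_eq_cos_div_sin]
    ring
  -- H x * cot x → L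
  have hHcot : Tendsto (fun x : ℝ => H x * Real.cot x) (𝓝[>] (0:ℝ)) (𝓝 L) := by
    have := hslope.mul hxcot
    rw [mul_one] at this
    refine this.congr' ?_
    filter_upwards [self_mem_nhdsWithin] with x hx
    have hx0 : x ≠ 0 := ne_of_gt hx
    field_simp
  -- LHS limit
  have hLHS : Tendsto (fun x => ((p - 1) * (H x) ^ 2 + k ^ 2) * deriv H x)
      (𝓝[>] (0:ℝ)) (𝓝 (((p - 1) * 0 ^ 2 + k ^ 2) * L)) :=
    (((tendsto_const_nhds.mul (hHlim.pow 2)).add tendsto_const_nhds).mul hcont)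
  -- RHS limit
  have hRHS : Tendsto (fun x => (1 - p) * ((H x) ^ 2 + k ^ 2) ^ 2
        + ((H x) ^ 2 + k ^ 2) * (k * (p - (N : ℝ)) + (2 - (N : ℝ)) * (H x * Real.cot x)))
      (𝓝[>] (0:ℝ)) (𝓝 ((1 - p) * (0 ^ 2 + k ^ 2) ^ 2
        + (0 ^ 2 + k ^ 2) * (k * (p - (N : ℝ)) + (2 - (N : ℝ)) * L))) := by
    exact (tendsto_const_nhds.mul (((hHlim.pow 2).add tendsto_const_nhds).pow 2)).add
      (((hHlim.pow 2).add tendsto_const_nhds).mul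
        (tendsto_const_nhds.add (tendsto_const_nhds.mul hHcot)))
  -- the two functions agree eventually
  have hmem : Ioo (0:ℝ) δ ∈ 𝓝[>] (0:ℝ) := Ioo_mem_nhdsGT_of_mem ⟨le_refl 0, hδ0⟩
  have hEq : ((p - 1) * 0 ^ 2 + k ^ 2) * L =
      (1 - p) * (0 ^ 2 + k ^ 2) ^ 2
        + (0 ^ 2 + k ^ 2) * (k * (p - (N : ℝ)) + (2 - (N : ℝ)) * L) := by
    refine tendsto_nhds_unique (hLHS.congr' ?_) hRHS
    filter_upwards [hmem] with x hx
    rw [heq x hx]; ring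
  have hk2 : (k : ℝ) ^ 2 ≠ 0 := pow_ne_zero 2 hk
  have hEq2 : L = (1 - p) * k ^ 2 + k * (p - (N : ℝ)) + (2 - (N : ℝ)) * L := by
    apply mul_left_cancel₀ hk2
    ring_nf
    ring_nf at hEq
    linarith [hEq]
  have h1 : L = (k ^ 2 * (1 - p) + k * (p - (N : ℝ))) / ((N : ℝ) - 1) := by
    rw [eq_div_iff hN1]
    linear_combination hEq2
  refine ⟨h1, ?_, ?_⟩
  · rw [h1]; field_simp; ring
  · intro hpN
    constructor
    · intro hkv
      rw [h1, hkv]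
      field_simp
      ring
    · intro hkv
      have h2 : L = k * (1 - p) / ((N : ℝ) - 1) * (k - ((N : ℝ) - p) / (1 - p)) := by
        rw [h1]; field_simp; ring
      rw [h2]
      have hkpos : 0 < ((N : ℝ) - p) / (1 - p) - k := by linarith
      have hkne : k < 0 ∨ 0 < k := hk.lt_or_gt
      have hkneg : k < ((N:ℝ) - p)/(1 - p) := hkv
      have hfrac : ((N:ℝ) - p)/(1 - p) < 0 := by
        apply div_neg_of_pos_of_neg <;> linarith
      have hkneg' : k < 0 := lt_trans hkv hfrac
      have t1 : 0 < k * (1 - p) / ((N : ℝ) - 1) := by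
        apply div_pos
        · nlinarith
        · linarith
      have t2 : k - ((N : ℝ) - p) / (1 - p) < 0 := by linarith
      exact mul_neg_of_pos_of_neg t1 t2
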